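/- For all integers k ≥ 2, h ≥ 1, and n ≥ 1, the following identity of polynomials in ℤ[q] holds: Q_{k,h,n}(q) = Q_{k−1,h−1,n−1}(q) + Σ_{a+b=n−2, a,b ≥ 0} P_{k−1,a}(q) · Q_{k,h,b}(q). -/

import Mathlib

open Finset

attribute [local instance] Classical.propDecidable

/-- The height of the lattice path `p` (where `true` is a northeast step `(1,1)` and
`false` is a southeast step `(1,-1)`) after its first `i` steps. -/
def pathHeight {n : ℕ} (p : Fin n → Bool) (i : ℕ) : ℤ :=
  ∑ j ∈ Finset.univ.filter (fun j : Fin n => (j : ℕ) < i), (if p j then (1 : ℤ) else -1)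

/-- `p` is a generalized Dyck path from `(0,0)` to `(n,h)`: it ends at height `h`
and never goes below the x-axis. -/
def IsGDPath {n : ℕ} (h : ℤ) (p : Fin n → Bool) : Prop :=
  pathHeight p n = h ∧ ∀ i ≤ n, 0 ≤ pathHeight p i

/-- The set of generalized Dyck paths from `(0,0)` to `(n,h)`. -/
noncomputable def gdPaths (n : ℕ) (h : ℤ) : Finset (Fin n → Bool) :=
  Finset.univ.filter (IsGDPath h)

/-- The number of `k`-down steps of `p`, i.e. southeast steps from height `k` to `k-1`. -/
noncomputable def downSteps {n : ℕ} (k : ℤ) (p : Fin n → Bool) : ℕ :=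
  (Finset.univ.filter (fun i : Fin n => p i = false ∧ pathHeight p (i : ℕ) = k)).card

/-- Binomial coefficient on integers, `0` unless `0 ≤ b ≤ a`. -/
def binom (a b : ℤ) : ℤ :=
  if 0 ≤ b ∧ b ≤ a then (a.toNat.choose b.toNat : ℤ) else 0

/-- $Q_{k,h,n}(q)\in\mathbb{Z}[q]$: the sum over all generalized Dyck paths from (0,0)
to (n,h) of $q^{st_k(p)}$, where $st_k(p)$ is the number of k-down steps of p. -/
noncomputable def Q (k h n : ℕ) : Polynomial ℤ :=
  ∑ p ∈ gdPaths n (h : ℤ), (Polynomial.X : Polynomial ℤ) ^ downSteps (k : ℤ) p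

/-- $P_{k,n}(q) = Q_{k,0,n}(q)$. -/
noncomputable def P (k n : ℕ) : Polynomial ℤ := Q k 0 n

/-! basics -/

def ht (f : ℕ → Bool) (i : ℕ) : ℤ :=
  ∑ j ∈ Finset.range i, (if f j then (1 : ℤ) else -1)

def fm {n : ℕ} (p : Fin n → Bool) (j : ℕ) : Bool :=
  if h : j < n then p ⟨j, h⟩ else true

lemma ht_zero (f : ℕ → Bool) : ht f 0 = 0 := by simp [ht]

lemma ht_succ (f : ℕ → Bool) (i : ℕ) :
    ht f (i + 1) = ht f i + (if f i then (1 : ℤ) else -1) := by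
  simp [ht, Finset.sum_range_succ]

lemma ht_add (f : ℕ → Bool) (m i : ℕ) :
    ht f (m + i) = ht f m + ht (fun j => f (m + j)) i := by
  induction i with
  | zero => simp [ht_zero]
  | succ i ih => rw [← Nat.add_assoc, ht_succ, ih, ht_succ]; ring

lemma ht_congr {f g : ℕ → Bool} {i : ℕ} (h : ∀ j < i, f j = g j) :
    ht f i = ht g i := by
  unfold ht
  exact Finset.sum_congr rfl (fun j hj => by rw [h j (Finset.mem_range.mp hj)])

lemma pathHeight_eq {n : ℕ} (p : Fin n → Bool) {i : ℕ} (hi : i ≤ n) :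
    pathHeight p i = ht (fm p) i := by
  unfold pathHeight ht
  refine Finset.sum_bij' (fun j _ => (j : ℕ)) (fun j hj => (⟨j, ?_⟩ : Fin n)) ?_ ?_ ?_ ?_ ?_
  · exact lt_of_lt_of_le (Finset.mem_range.mp hj) hi
  · intro a ha
    simp only [Finset.mem_filter, Finset.mem_univ, true_and] at ha
    exact Finset.mem_range.mpr ha
  · intro a ha
    simp only [Finset.mem_filter, Finset.mem_univ, true_and]
    exact Finset.mem_range.mp ha
  · intro a _; rfl
  · intro a _; rfl
  · intro a ha
    have : (a : ℕ) < n := a.2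
    simp [fm, this]

/-! membership and downSteps in terms of ht -/

lemma mem_gdPaths {n : ℕ} {h : ℤ} {p : Fin n → Bool} :
    p ∈ gdPaths n h ↔ ht (fm p) n = h ∧ ∀ i ≤ n, 0 ≤ ht (fm p) i := by
  simp only [gdPaths, Finset.mem_filter, Finset.mem_univ, true_and, IsGDPath]
  constructor
  · rintro ⟨h1, h2⟩
    exact ⟨by rw [← pathHeight_eq p le_rfl]; exact h1,
      fun i hi => by rw [← pathHeight_eq p hi]; exact h2 i hi⟩
  · rintro ⟨h1, h2⟩
    exact ⟨by rw [pathHeight_eq p le_rfl]; exact h1,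
      fun i hi => by rw [pathHeight_eq p hi]; exact h2 i hi⟩

lemma downSteps_eq {n : ℕ} (k : ℤ) (p : Fin n → Bool) :
    downSteps k p =
      (Finset.univ.filter (fun i : Fin n => p i = false ∧ ht (fm p) (i : ℕ) = k)).card := by
  unfold downSteps
  congr 1
  apply Finset.filter_congr
  intro i _
  rw [pathHeight_eq p (le_of_lt i.2)]

/-! segments -/

def seg {n : ℕ} (m b : ℕ) (p : Fin n → Bool) : Fin b → Bool := fun j => fm p (m + (j : ℕ))

lemma fm_seg {n : ℕ} (m b : ℕ) (p : Fin n → Bool) {j : ℕ} (hj : j < b) :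
    fm (seg m b p) j = fm p (m + j) := by
  have : fm (seg m b p) j = seg m b p ⟨j, hj⟩ := by unfold fm; rw [dif_pos hj]
  rw [this]; rfl

lemma ht_seg {n : ℕ} (m b : ℕ) (p : Fin n → Bool) {i : ℕ} (hi : i ≤ b) :
    ht (fm (seg m b p)) i = ht (fm p) (m + i) - ht (fm p) m := by
  rw [ht_add]
  have : ht (fun j => fm p (m + j)) i = ht (fm (seg m b p)) i :=
    ht_congr (fun j hj => (fm_seg m b p (lt_of_lt_of_le hj hi)).symm)
  rw [this]; ring

lemma fm_val {n : ℕ} (p : Fin n → Bool) (a : Fin n) : fm p (a : ℕ) = p a := by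
  unfold fm; rw [dif_pos a.2]

lemma fm_zero_true {n : ℕ} {h : ℤ} {p : Fin n → Bool} (hn : 1 ≤ n)
    (hp : p ∈ gdPaths n h) : fm p 0 = true := by
  obtain ⟨-, h2⟩ := mem_gdPaths.mp hp
  have h1 := h2 1 hn
  rw [show (1 : ℕ) = 0 + 1 from rfl, ht_succ, ht_zero] at h1
  by_contra hne
  rw [Bool.not_eq_true] at hne
  rw [hne] at h1
  norm_num at h1

lemma ht_one {f : ℕ → Bool} (h0 : f 0 = true) : ht f 1 = 1 := by
  rw [show (1 : ℕ) = 0 + 1 from rfl, ht_succ, ht_zero, h0]; norm_num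

lemma fm_lt {n : ℕ} (p : Fin n → Bool) {j : ℕ} (h : j < n) : fm p j = p ⟨j, h⟩ := dif_pos h

/-- counting down steps after removing first (up) step -/
lemma first_ne {n : ℕ} (hn : 1 ≤ n) (p : Fin n → Bool) (h0 : fm p 0 = true) {a : Fin n}
    (hfa : p a = false) : 1 ≤ (a : ℕ) := by
  by_contra h'
  have h'' : (a : ℕ) = 0 := by omega
  have : p a = true := by
    have := fm_lt p (show (0:ℕ) < n from hn)
    rw [h0] at this
    rw [show a = ⟨0, hn⟩ from Fin.ext h'']
    exact this.symm
  rw [this] at hfa; exact Bool.noConfusion hfa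

lemma dsA {n : ℕ} (hn : 1 ≤ n) (p : Fin n → Bool) (h0 : fm p 0 = true) (k : ℤ) :
    downSteps k p = downSteps (k - 1) (seg 1 (n - 1) p) := by
  rw [downSteps_eq, downSteps_eq]
  refine Finset.card_bij' (fun a ha => (⟨(a : ℕ) - 1, by
      simp only [Finset.mem_filter, Finset.mem_univ, true_and] at ha
      have h1 := first_ne hn p h0 ha.1
      have h2 := a.2; omega⟩ : Fin (n - 1)))
    (fun b _ => (⟨(b : ℕ) + 1, by have := b.2; omega⟩ : Fin n)) ?_ ?_ ?_ ?_
  · intro a ha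
    simp only [Finset.mem_filter, Finset.mem_univ, true_and] at ha ⊢
    obtain ⟨hfa, hha⟩ := ha
    have ha1 : 1 ≤ (a : ℕ) := first_ne hn p h0 hfa
    constructor
    · show fm p (1 + ((a : ℕ) - 1)) = false
      rw [show 1 + ((a : ℕ) - 1) = (a : ℕ) by omega, fm_val, hfa]
    · show ht (fm (seg 1 (n - 1) p)) ((a : ℕ) - 1) = k - 1
      rw [ht_seg 1 (n - 1) p (by omega : (a : ℕ) - 1 ≤ n - 1), ht_one h0,
        show 1 + ((a : ℕ) - 1) = (a : ℕ) by omega, hha]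
  · intro b hb
    simp only [Finset.mem_filter, Finset.mem_univ, true_and] at hb ⊢
    obtain ⟨hfb, hhb⟩ := hb
    rw [show ht (fm (seg 1 (n-1) p)) (b : ℕ) = ht (fm (seg 1 (n-1) p)) ((b : ℕ)) from rfl,
      ht_seg 1 (n - 1) p (le_of_lt b.2), ht_one h0] at hhb
    have hfb' : fm p (1 + (b : ℕ)) = false := hfb
    constructor
    · rw [← fm_lt p (by omega : (b : ℕ) + 1 < n),
        show (b : ℕ) + 1 = 1 + (b : ℕ) by omega]
      exact hfb'
    · show ht (fm p) ((b : ℕ) + 1) = k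
      rw [show (b : ℕ) + 1 = 1 + (b : ℕ) by omega]
      omega
  · intro a ha
    simp only [Finset.mem_filter, Finset.mem_univ, true_and] at ha
    obtain ⟨hfa, -⟩ := ha
    have ha1 : 1 ≤ (a : ℕ) := first_ne hn p h0 hfa
    apply Fin.ext
    show (a : ℕ) - 1 + 1 = (a : ℕ)
    omega
  · intro b _
    apply Fin.ext
    show (b : ℕ) + 1 - 1 = (b : ℕ)
    omega

/-! cons -/

def cns {m : ℕ} (q : Fin m → Bool) (n : ℕ) : Fin n → Bool :=
  fun i => if (i : ℕ) = 0 then true else fm q ((i : ℕ) - 1)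

lemma cns0 {m : ℕ} (q : Fin m → Bool) {n : ℕ} (hn : 0 < n) : fm (cns q n) 0 = true := by
  rw [fm_lt _ hn]; rfl

lemma fm_ge {m : ℕ} (q : Fin m → Bool) {j : ℕ} (hj : m ≤ j) : fm q j = true := by
  unfold fm; rw [dif_neg (by omega)]

lemma cns_succ {m : ℕ} (q : Fin m → Bool) {n : ℕ} (hmn : n = m + 1) (j : ℕ) :
    fm (cns q n) (1 + j) = fm q j := by
  by_cases hj : 1 + j < n
  · rw [fm_lt _ hj]
    show (if (1 + j : ℕ) = 0 then true else fm q (1 + j - 1)) = fm q j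
    rw [if_neg (by omega), show 1 + j - 1 = j by omega]
  · rw [fm_ge _ (by omega), fm_ge q (by omega)]

lemma ht_cns {m : ℕ} (q : Fin m → Bool) {n : ℕ} (hmn : n = m + 1) (i : ℕ) :
    ht (fm (cns q n)) (1 + i) = 1 + ht (fm q) i := by
  rw [ht_add, ht_one (cns0 q (by omega)), ht_congr (fun j _ => cns_succ q hmn j)]

lemma ht_seg1 {n : ℕ} (p : Fin n → Bool) (h0 : fm p 0 = true) {i : ℕ} (hi : i ≤ n - 1) :
    ht (fm p) (1 + i) = 1 + ht (fm (seg 1 (n - 1) p)) i := by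
  rw [ht_seg 1 (n - 1) p hi, ht_one h0]; ring

/-! Part A -/

lemma partA (n : ℕ) (hn : 1 ≤ n) (k h : ℤ) :
    ∑ p ∈ (gdPaths n h).filter (fun p => ∀ i, 1 ≤ i → i ≤ n → 1 ≤ ht (fm p) i),
        (Polynomial.X : Polynomial ℤ) ^ downSteps k p =
    ∑ q ∈ gdPaths (n - 1) (h - 1), (Polynomial.X : Polynomial ℤ) ^ downSteps (k - 1) q := by
  refine Finset.sum_bij' (fun p _ => seg 1 (n - 1) p) (fun q _ => cns q n) ?_ ?_ ?_ ?_ ?_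
  · intro p hp
    simp only [Finset.mem_filter] at hp
    obtain ⟨hp1, hpC⟩ := hp
    have h0 := fm_zero_true hn hp1
    obtain ⟨he, hnn⟩ := mem_gdPaths.mp hp1
    rw [mem_gdPaths]
    constructor
    · have := ht_seg1 p h0 (le_refl (n - 1))
      rw [show 1 + (n - 1) = n by omega, he] at this
      omega
    · intro i hi
      have := ht_seg1 p h0 hi
      have h2 := hpC (1 + i) (by omega) (by omega)
      omega
  · intro q hq
    obtain ⟨he, hnn⟩ := mem_gdPaths.mp hq
    simp only [Finset.mem_filter]
    have hkey : ∀ i, 1 ≤ i → i ≤ n → ht (fm (cns q n)) i = 1 + ht (fm q) (i - 1) := by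
      intro i hi1 hi2
      rw [show i = 1 + (i - 1) by omega, ht_cns q (by omega)]
      congr 2
      omega
    constructor
    · rw [mem_gdPaths]
      constructor
      · rw [hkey n hn (le_refl n), he]
        ring
      · intro i hi
        rcases Nat.eq_zero_or_pos i with h' | h'
        · rw [h', ht_zero]
        · rw [hkey i h' hi]
          have := hnn (i - 1) (by omega)
          omega
    · intro i hi1 hi2
      rw [hkey i hi1 hi2]
      have := hnn (i - 1) (by omega)
      omega
  · intro p hp
    simp only [Finset.mem_filter] at hp
    have h0 := fm_zero_true hn hp.1
    funext i
    show (if (i : ℕ) = 0 then true else fm (seg 1 (n - 1) p) ((i : ℕ) - 1)) = p i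
    by_cases hi0 : (i : ℕ) = 0
    · rw [if_pos hi0]
      rw [show i = ⟨0, hn⟩ from Fin.ext hi0, ← fm_lt p hn, h0]
    · rw [if_neg hi0]
      have hlt : (i : ℕ) - 1 < n - 1 := by have := i.2; omega
      rw [fm_lt _ hlt]
      show fm p (1 + ((i : ℕ) - 1)) = p i
      rw [show 1 + ((i : ℕ) - 1) = (i : ℕ) by omega, fm_val]
  · intro q _
    funext j
    show fm (cns q n) (1 + (j : ℕ)) = q j
    rw [cns_succ q (by omega), fm_val]
  · intro p hp
    simp only [Finset.mem_filter] at hp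
    have h0 := fm_zero_true hn hp.1
    rw [dsA hn p h0 k]

/-! Part B : first return -/

noncomputable def fr {n : ℕ} (p : Fin n → Bool) : ℕ :=
  sInf {i | 1 ≤ i ∧ ht (fm p) i = 0}

lemma fr_spec {n : ℕ} {h : ℤ} {p : Fin n → Bool} (hn : 1 ≤ n) (hh : 1 ≤ h)
    (hp : p ∈ gdPaths n h)
    (hC : ¬ ∀ i, 1 ≤ i → i ≤ n → 1 ≤ ht (fm p) i) :
    2 ≤ fr p ∧ fr p < n ∧ ht (fm p) (fr p) = 0 ∧
      (∀ i, 1 ≤ i → i < fr p → 1 ≤ ht (fm p) i) ∧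
      ht (fm p) (fr p - 1) = 1 ∧ fm p (fr p - 1) = false := by
  obtain ⟨he, hnn⟩ := mem_gdPaths.mp hp
  have h0 := fm_zero_true hn hp
  push_neg at hC
  obtain ⟨i0, hi01, hi0n, hi0⟩ := hC
  have hi00 : ht (fm p) i0 = 0 := le_antisymm (by omega) (hnn i0 hi0n)
  have hne : ({i | 1 ≤ i ∧ ht (fm p) i = 0} : Set ℕ).Nonempty := ⟨i0, hi01, hi00⟩
  have hmem := Nat.sInf_mem hne
  obtain ⟨hfr1', hfr0'⟩ := hmem
  have hfr1 : 1 ≤ fr p := hfr1'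
  have hfr0 : ht (fm p) (fr p) = 0 := hfr0'
  clear hfr1' hfr0'
  have hfrle : fr p ≤ i0 := Nat.sInf_le ⟨hi01, hi00⟩
  have hmin : ∀ i, 1 ≤ i → i < fr p → 1 ≤ ht (fm p) i := by
    intro i hi1 hi2
    have hns := Nat.notMem_of_lt_sInf (s := {i | 1 ≤ i ∧ ht (fm p) i = 0}) hi2
    simp only [Set.mem_setOf_eq, not_and] at hns
    have := hnn i (by omega)
    have := hns hi1
    omega
  have hfr2 : 2 ≤ fr p := by
    rcases Nat.lt_or_ge (fr p) 2 with h' | h'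
    · exfalso
      have : fr p = 1 := by omega
      rw [this, ht_one h0] at hfr0
      norm_num at hfr0
    · exact h'
  have hfrn : fr p < n := by
    rcases Nat.lt_or_ge (fr p) n with h' | h'
    · exact h'
    · exfalso
      have : fr p = n := by omega
      rw [this, he] at hfr0
      omega
  have hstep := ht_succ (fm p) (fr p - 1)
  rw [show fr p - 1 + 1 = fr p by omega] at hstep
  have hprev : 1 ≤ ht (fm p) (fr p - 1) := hmin _ (by omega) (by omega)
  have hdown : fm p (fr p - 1) = false := by
    by_contra h'
    rw [Bool.not_eq_false] at h'
    rw [h', if_pos rfl] at hstep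
    omega
  refine ⟨hfr2, hfrn, hfr0, hmin, ?_, hdown⟩
  rw [hdown] at hstep
  simp at hstep
  omega

/-- splitting the down-step count at the first return `m` -/
lemma dsB {n : ℕ} (p : Fin n → Bool) {m : ℕ} (hm2 : 2 ≤ m) (hmn : m < n)
    (h0 : fm p 0 = true) (hm1 : ht (fm p) (m - 1) = 1) (hm0 : ht (fm p) m = 0)
    {k : ℤ} (hk : 2 ≤ k) :
    downSteps k p = downSteps (k - 1) (seg 1 (m - 2) p) + downSteps k (seg m (n - m) p) := by
  have hn : 1 ≤ n := by omega
  rw [downSteps_eq, downSteps_eq, downSteps_eq]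
  rw [← Finset.card_filter_add_card_filter_not
    (fun i : Fin n => (i : ℕ) ≤ m - 2)]
  congr 1
  · -- low part
    rw [Finset.filter_filter]
    refine Finset.card_bij' (fun a ha => (⟨(a : ℕ) - 1, by
        simp only [Finset.mem_filter, Finset.mem_univ, true_and] at ha
        have := first_ne hn p h0 ha.1.1
        omega⟩ : Fin (m - 2)))
      (fun b _ => (⟨(b : ℕ) + 1, by have := b.2; omega⟩ : Fin n)) ?_ ?_ ?_ ?_
    · intro a ha
      simp only [Finset.mem_filter, Finset.mem_univ, true_and] at ha ⊢
      obtain ⟨⟨hfa, hha⟩, hle⟩ := ha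
      have ha1 : 1 ≤ (a : ℕ) := first_ne hn p h0 hfa
      constructor
      · show fm p (1 + ((a : ℕ) - 1)) = false
        rw [show 1 + ((a : ℕ) - 1) = (a : ℕ) by omega, fm_val, hfa]
      · show ht (fm (seg 1 (m - 2) p)) ((a : ℕ) - 1) = k - 1
        rw [ht_seg 1 (m - 2) p (by omega : (a : ℕ) - 1 ≤ m - 2), ht_one h0,
          show 1 + ((a : ℕ) - 1) = (a : ℕ) by omega, hha]
    · intro b hb
      simp only [Finset.mem_filter, Finset.mem_univ, true_and] at hb ⊢
      obtain ⟨hfb, hhb⟩ := hb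
      rw [ht_seg 1 (m - 2) p (le_of_lt b.2), ht_one h0] at hhb
      have hfb' : fm p (1 + (b : ℕ)) = false := hfb
      have hb2 := b.2
      refine ⟨⟨?_, ?_⟩, by omega⟩
      · rw [← fm_lt p (by omega : (b : ℕ) + 1 < n),
          show (b : ℕ) + 1 = 1 + (b : ℕ) by omega]
        exact hfb'
      · show ht (fm p) ((b : ℕ) + 1) = k
        rw [show (b : ℕ) + 1 = 1 + (b : ℕ) by omega]
        omega
    · intro a ha
      simp only [Finset.mem_filter, Finset.mem_univ, true_and] at ha
      have ha1 : 1 ≤ (a : ℕ) := first_ne hn p h0 ha.1.1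
      apply Fin.ext
      show (a : ℕ) - 1 + 1 = (a : ℕ)
      omega
    · intro b _
      apply Fin.ext
      show (b : ℕ) + 1 - 1 = (b : ℕ)
      omega
  · -- high part
    rw [Finset.filter_filter]
    refine Finset.card_bij' (fun a ha => (⟨(a : ℕ) - m, by
        simp only [Finset.mem_filter, Finset.mem_univ, true_and] at ha
        have h2 := a.2
        omega⟩ : Fin (n - m)))
      (fun b _ => (⟨m + (b : ℕ), by have := b.2; omega⟩ : Fin n)) ?_ ?_ ?_ ?_
    · intro a ha
      simp only [Finset.mem_filter, Finset.mem_univ, true_and] at ha ⊢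
      obtain ⟨⟨hfa, hha⟩, hgt⟩ := ha
      have ham : m ≤ (a : ℕ) := by
        by_contra h'
        have : (a : ℕ) = m - 1 := by omega
        rw [this, hm1] at hha
        omega
      constructor
      · show fm p (m + ((a : ℕ) - m)) = false
        rw [show m + ((a : ℕ) - m) = (a : ℕ) by omega, fm_val, hfa]
      · show ht (fm (seg m (n - m) p)) ((a : ℕ) - m) = k
        rw [ht_seg m (n - m) p (by have := a.2; omega : (a : ℕ) - m ≤ n - m), hm0,
          show m + ((a : ℕ) - m) = (a : ℕ) by omega, hha]
        ring
    · intro b hb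
      simp only [Finset.mem_filter, Finset.mem_univ, true_and] at hb ⊢
      obtain ⟨hfb, hhb⟩ := hb
      rw [ht_seg m (n - m) p (le_of_lt b.2), hm0] at hhb
      have hfb' : fm p (m + (b : ℕ)) = false := hfb
      refine ⟨⟨?_, ?_⟩, by omega⟩
      · rw [← fm_lt p (by have := b.2; omega : m + (b : ℕ) < n)]
        exact hfb'
      · show ht (fm p) (m + (b : ℕ)) = k
        omega
    · intro a ha
      simp only [Finset.mem_filter, Finset.mem_univ, true_and] at ha
      obtain ⟨⟨hfa, hha⟩, hgt⟩ := ha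
      have ham : m ≤ (a : ℕ) := by
        by_contra h'
        have : (a : ℕ) = m - 1 := by omega
        rw [this, hm1] at hha
        omega
      apply Fin.ext
      show m + ((a : ℕ) - m) = (a : ℕ)
      omega
    · intro b _
      apply Fin.ext
      show m + (b : ℕ) - m = (b : ℕ)
      omega

/-! combine -/

def cmb {a b : ℕ} (p1 : Fin a → Bool) (p2 : Fin b → Bool) (n : ℕ) : Fin n → Bool :=
  fun i => if (i : ℕ) = 0 then true
    else if (i : ℕ) ≤ a then fm p1 ((i : ℕ) - 1)
    else if (i : ℕ) = a + 1 then false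
    else fm p2 ((i : ℕ) - (a + 2))

section cmb
variable {a b n : ℕ} (p1 : Fin a → Bool) (p2 : Fin b → Bool)

lemma cmb0 (hab : a + b + 2 = n) : fm (cmb p1 p2 n) 0 = true := by
  rw [fm_lt _ (show 0 < n by omega)]; rfl

lemma cmb1 (hab : a + b + 2 = n) {j : ℕ} (hj : j < a) : fm (cmb p1 p2 n) (1 + j) = fm p1 j := by
  rw [fm_lt _ (show 1 + j < n by omega)]
  show (if (1 + j : ℕ) = 0 then true else if 1 + j ≤ a then fm p1 (1 + j - 1)
    else if 1 + j = a + 1 then false else fm p2 (1 + j - (a + 2))) = fm p1 j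
  rw [if_neg (by omega), if_pos (by omega), show 1 + j - 1 = j by omega]

lemma cmb2 (hab : a + b + 2 = n) : fm (cmb p1 p2 n) (a + 1) = false := by
  rw [fm_lt _ (show a + 1 < n by omega)]
  show (if (a + 1 : ℕ) = 0 then true else if a + 1 ≤ a then fm p1 (a + 1 - 1)
    else if a + 1 = a + 1 then false else fm p2 (a + 1 - (a + 2))) = false
  rw [if_neg (by omega), if_neg (by omega), if_pos rfl]

lemma cmb3 (hab : a + b + 2 = n) {j : ℕ} (hj : j < b) : fm (cmb p1 p2 n) (a + 2 + j) = fm p2 j := by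
  rw [fm_lt _ (show a + 2 + j < n by omega)]
  show (if (a + 2 + j : ℕ) = 0 then true else if a + 2 + j ≤ a then fm p1 (a + 2 + j - 1)
    else if a + 2 + j = a + 1 then false else fm p2 (a + 2 + j - (a + 2))) = fm p2 j
  rw [if_neg (by omega), if_neg (by omega), if_neg (by omega),
    show a + 2 + j - (a + 2) = j by omega]

lemma cmb_ht1 (hab : a + b + 2 = n) {i : ℕ} (hi : i ≤ a) :
    ht (fm (cmb p1 p2 n)) (1 + i) = 1 + ht (fm p1) i := by
  rw [ht_add, ht_one (cmb0 p1 p2 hab),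
    ht_congr (fun j hj => cmb1 p1 p2 hab (by omega : j < a))]

lemma cmb_ht2 (hab : a + b + 2 = n) : ht (fm (cmb p1 p2 n)) (a + 2) = ht (fm p1) a := by
  rw [show a + 2 = (a + 1) + 1 from rfl, ht_succ, cmb2 p1 p2 hab,
    show a + 1 = 1 + a by omega, cmb_ht1 p1 p2 hab (le_refl a)]
  simp

lemma cmb_ht3 (hab : a + b + 2 = n) {i : ℕ} (hi : i ≤ b) :
    ht (fm (cmb p1 p2 n)) (a + 2 + i) = ht (fm p1) a + ht (fm p2) i := by
  rw [ht_add, cmb_ht2 p1 p2 hab,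
    ht_congr (fun j hj => cmb3 p1 p2 hab (by omega : j < b))]

end cmb

/-! Part B : fiber bijection -/

lemma fiberB (n : ℕ) (hn : 1 ≤ n) (k h : ℤ) (hh : 1 ≤ h) (hk : 2 ≤ k)
    (a b : ℕ) (hab : a + b + 2 = n) :
    ∑ p ∈ ((gdPaths n h).filter
        (fun p => ¬ ∀ i, 1 ≤ i → i ≤ n → 1 ≤ ht (fm p) i)).filter
        (fun p => (fr p - 2, n - fr p) = (a, b)),
      (Polynomial.X : Polynomial ℤ) ^ downSteps k p =
    ∑ x ∈ (gdPaths a (0 : ℤ)) ×ˢ (gdPaths b h),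
      (Polynomial.X : Polynomial ℤ) ^ downSteps (k - 1) x.1 *
        (Polynomial.X : Polynomial ℤ) ^ downSteps k x.2 := by
  have key : ∀ p ∈ ((gdPaths n h).filter
        (fun p => ¬ ∀ i, 1 ≤ i → i ≤ n → 1 ≤ ht (fm p) i)).filter
        (fun p => (fr p - 2, n - fr p) = (a, b)),
      p ∈ gdPaths n h ∧ fm p 0 = true ∧ fr p = a + 2 ∧ fr p < n ∧
        ht (fm p) (fr p) = 0 ∧ (∀ i, 1 ≤ i → i < fr p → 1 ≤ ht (fm p) i) ∧
        ht (fm p) (fr p - 1) = 1 ∧ fm p (fr p - 1) = false := by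
    intro p hp
    simp only [Finset.mem_filter] at hp
    obtain ⟨⟨hp1, hC⟩, hfr⟩ := hp
    obtain ⟨hfr2, hfrn, hfr0, hmin, hm1, hpm⟩ := fr_spec hn hh hp1 hC
    have hfra : fr p = a + 2 := by
      have := congrArg Prod.fst hfr
      simp at this
      omega
    exact ⟨hp1, fm_zero_true hn hp1, hfra, hfrn, hfr0, hmin, hm1, hpm⟩
  refine Finset.sum_bij' (fun p _ => (seg 1 a p, seg (a + 2) b p))
    (fun x _ => cmb x.1 x.2 n) ?_ ?_ ?_ ?_ ?_
  · -- forward membership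
    intro p hp
    obtain ⟨hp1, h0, hfra, hfrn, hfr0, hmin, hm1, hpm⟩ := key p hp
    obtain ⟨he, hnn⟩ := mem_gdPaths.mp hp1
    rw [Finset.mem_product]
    constructor
    · rw [mem_gdPaths]
      constructor
      · rw [ht_seg 1 a p (le_refl a), ht_one h0]
        rw [show 1 + a = fr p - 1 by omega] at *
        omega
      · intro i hi
        rw [ht_seg 1 a p hi, ht_one h0]
        have := hmin (1 + i) (by omega) (by omega)
        omega
    · rw [mem_gdPaths]
      have hz : ht (fm p) (a + 2) = 0 := by rw [← hfra]; exact hfr0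
      constructor
      · rw [ht_seg (a + 2) b p (le_refl b), hz,
          show a + 2 + b = n by omega, he]
        ring
      · intro i hi
        rw [ht_seg (a + 2) b p hi, hz]
        have := hnn (a + 2 + i) (by omega)
        omega
  · -- backward membership
    intro x hx
    rw [Finset.mem_product] at hx
    obtain ⟨hx1, hx2⟩ := hx
    obtain ⟨he1, hnn1⟩ := mem_gdPaths.mp hx1
    obtain ⟨he2, hnn2⟩ := mem_gdPaths.mp hx2
    set q := cmb x.1 x.2 n with hq
    have hqht : ∀ i, 1 ≤ i → i ≤ a + 1 → ht (fm q) i = 1 + ht (fm x.1) (i - 1) := by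
      intro i hi1 hi2
      rw [show i = 1 + (i - 1) by omega, cmb_ht1 x.1 x.2 hab (by omega)]
      congr 2
      omega
    have hqht2 : ∀ i, a + 2 ≤ i → i ≤ n → ht (fm q) i = ht (fm x.2) (i - (a + 2)) := by
      intro i hi1 hi2
      rw [show i = a + 2 + (i - (a + 2)) by omega, cmb_ht3 x.1 x.2 hab (by omega), he1]
      rw [show a + 2 + (i - (a + 2)) - (a + 2) = i - (a + 2) by omega]
      ring
    have hmemq : q ∈ gdPaths n h := by
      rw [mem_gdPaths]
      constructor
      · rw [hqht2 n (by omega) (le_refl n), show n - (a + 2) = b by omega, he2]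
      · intro i hi
        rcases Nat.eq_zero_or_pos i with h' | h'
        · rw [h', ht_zero]
        · rcases Nat.lt_or_ge i (a + 2) with h'' | h''
          · rw [hqht i h' (by omega)]
            have := hnn1 (i - 1) (by omega)
            omega
          · rw [hqht2 i h'' hi]
            exact hnn2 _ (by omega)
    have hq0 : ht (fm q) (a + 2) = 0 := by
      rw [hqht2 (a + 2) (le_refl _) (by omega)]
      simp [ht_zero]
    have hfrq : fr q = a + 2 := by
      apply le_antisymm
      · exact Nat.sInf_le (show a + 2 ∈ {i | 1 ≤ i ∧ ht (fm q) i = 0} from ⟨by omega, hq0⟩)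
      · apply le_csInf ⟨a + 2, show a + 2 ∈ {i | 1 ≤ i ∧ ht (fm q) i = 0} from ⟨by omega, hq0⟩⟩
        intro j hj
        obtain ⟨hj1, hj0⟩ := hj
        by_contra h'
        have hja : j ≤ a + 1 := by omega
        rw [hqht j hj1 hja] at hj0
        have := hnn1 (j - 1) (by omega)
        omega
    simp only [Finset.mem_filter]
    refine ⟨⟨hmemq, ?_⟩, ?_⟩
    · push_neg
      exact ⟨a + 2, by omega, by omega, by rw [hq0]; exact zero_lt_one⟩
    · rw [hfrq]
      simp only [Prod.mk.injEq]
      constructor <;> omega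
  · -- left inverse
    intro p hp
    obtain ⟨hp1, h0, hfra, hfrn, hfr0, hmin, hm1, hpm⟩ := key p hp
    dsimp only
    funext i
    show (if (i : ℕ) = 0 then true
      else if (i : ℕ) ≤ a then fm (seg 1 a p) ((i : ℕ) - 1)
      else if (i : ℕ) = a + 1 then false
      else fm (seg (a + 2) b p) ((i : ℕ) - (a + 2))) = p i
    have hi2 := i.2
    rcases Nat.eq_zero_or_pos (i : ℕ) with h' | h'
    · rw [if_pos h']
      rw [show i = ⟨0, by omega⟩ from Fin.ext h', ← fm_lt p (by omega : 0 < n), h0]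
    · rw [if_neg (by omega)]
      rcases Nat.lt_or_ge (i : ℕ) (a + 1) with h'' | h''
      · rw [if_pos (by omega)]
        rw [fm_lt _ (by omega : (i : ℕ) - 1 < a)]
        show fm p (1 + ((i : ℕ) - 1)) = p i
        rw [show 1 + ((i : ℕ) - 1) = (i : ℕ) by omega, fm_val]
      · rw [if_neg (by omega)]
        rcases Nat.eq_or_lt_of_le h'' with h3 | h3
        · rw [if_pos (by omega)]
          have : fm p ((i : ℕ)) = false := by
            rw [show (i : ℕ) = fr p - 1 by omega]
            exact hpm
          rw [← fm_val p i, this]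
        · rw [if_neg (by omega)]
          rw [fm_lt _ (by omega : (i : ℕ) - (a + 2) < b)]
          show fm p (a + 2 + ((i : ℕ) - (a + 2))) = p i
          rw [show a + 2 + ((i : ℕ) - (a + 2)) = (i : ℕ) by omega, fm_val]
  · -- right inverse
    intro x _
    ext j
    · show fm (cmb x.1 x.2 n) (1 + (j : ℕ)) = x.1 j
      rw [cmb1 x.1 x.2 hab j.2, fm_val]
    · show fm (cmb x.1 x.2 n) (a + 2 + (j : ℕ)) = x.2 j
      rw [cmb3 x.1 x.2 hab j.2, fm_val]
  · -- values
    intro p hp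
    obtain ⟨hp1, h0, hfra, hfrn, hfr0, hmin, hm1, hpm⟩ := key p hp
    dsimp only
    have e1 : ht (fm p) (a + 2 - 1) = 1 := by
      rw [show a + 2 - 1 = fr p - 1 by omega]; exact hm1
    have e2 : ht (fm p) (a + 2) = 0 := by rw [← hfra]; exact hfr0
    have e0 : a + 2 < n := by omega
    have e3 : (2:ℕ) ≤ a + 2 := by omega
    rw [dsB p (m := a + 2) e3 e0 h0 e1 e2 hk]
    rw [show n - (a + 2) = b from by omega, show a + 2 - 2 = a from rfl]
    rw [pow_add]


/-- For k ≥ 2, h ≥ 1, n ≥ 1,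
Q_{k,h,n}(q) = Q_{k−1,h−1,n−1}(q) + Σ_{a+b=n−2, a,b≥0} P_{k−1,a}(q)·Q_{k,h,b}(q). -/
theorem stmt11 (k h n : ℕ) (hk : 2 ≤ k) (hh : 1 ≤ h) (hn : 1 ≤ n) :
    Q k h n =
      Q (k - 1) (h - 1) (n - 1) +
        ∑ ab ∈ (Finset.range n ×ˢ Finset.range n).filter (fun ab => ab.1 + ab.2 + 2 = n),
          P (k - 1) ab.1 * Q k h ab.2 := by
  have hK : (2 : ℤ) ≤ (k : ℤ) := by exact_mod_cast hk
  have hH : (1 : ℤ) ≤ (h : ℤ) := by exact_mod_cast hh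
  have hQ1 : Q (k - 1) (h - 1) (n - 1) =
      ∑ q ∈ gdPaths (n - 1) ((h : ℤ) - 1),
        (Polynomial.X : Polynomial ℤ) ^ downSteps ((k : ℤ) - 1) q := by
    unfold Q
    rw [Nat.cast_sub hh, Nat.cast_sub (by omega : 1 ≤ k)]
    norm_num
  have hP : ∀ a : ℕ, P (k - 1) a =
      ∑ p ∈ gdPaths a (0 : ℤ),
        (Polynomial.X : Polynomial ℤ) ^ downSteps ((k : ℤ) - 1) p := by
    intro a
    unfold P Q
    rw [Nat.cast_sub (by omega : 1 ≤ k)]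
    norm_num
  show (∑ p ∈ gdPaths n (h : ℤ), (Polynomial.X : Polynomial ℤ) ^ downSteps (k : ℤ) p) = _
  rw [← Finset.sum_filter_add_sum_filter_not (gdPaths n (h : ℤ))
    (fun p => ∀ i, 1 ≤ i → i ≤ n → 1 ≤ ht (fm p) i)]
  congr 1
  · rw [partA n hn (k : ℤ) (h : ℤ), hQ1]
  · have hmaps : ∀ p ∈ (gdPaths n (h : ℤ)).filter
        (fun p => ¬ ∀ i, 1 ≤ i → i ≤ n → 1 ≤ ht (fm p) i),
        (fr p - 2, n - fr p) ∈
          (Finset.range n ×ˢ Finset.range n).filter (fun ab => ab.1 + ab.2 + 2 = n) := by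
      intro p hp
      simp only [Finset.mem_filter] at hp
      obtain ⟨hp1, hC⟩ := hp
      obtain ⟨hfr2, hfrn, -, -, -, -⟩ := fr_spec hn hH hp1 hC
      simp only [Finset.mem_filter, Finset.mem_product, Finset.mem_range]
      refine ⟨⟨by omega, by omega⟩, by omega⟩
    rw [← Finset.sum_fiberwise_of_maps_to hmaps
      (fun p => (Polynomial.X : Polynomial ℤ) ^ downSteps (k : ℤ) p)]
    apply Finset.sum_congr rfl
    intro ab hab
    simp only [Finset.mem_filter, Finset.mem_product, Finset.mem_range] at hab
    have habn : ab.1 + ab.2 + 2 = n := hab.2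
    have hfib := fiberB n hn (k : ℤ) (h : ℤ) hH hK ab.1 ab.2 habn
    rw [Prod.mk.eta] at hfib
    rw [hfib, Finset.sum_product, hP ab.1]
    show _ = _ * Q k h ab.2
    unfold Q
    rw [Finset.sum_mul_sum]
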